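/- Let (z*, μ̲*, μ̄*) be a KKT point of the problem min_{z∈Z} f(z) subject to v̲ ≤ Az + a ≤ v̄, and suppose there exist z̃ ∈ Z and δ > 0 such that z̃ is a strict Slater point with margin δ. Then the optimal dual multipliers are bounded; explicitly, Σⱼ μ̲*ⱼ + Σⱼ μ̄*ⱼ ≤ (f(z̃) − f(z*))/δ. -/

import Mathlib

open scoped InnerProductSpace Matrix

/-- Boundedness of the optimal dual multipliers at a KKT point of
`min_{z ∈ Z} f(z)  s.t.  v̲ ≤ A z + a ≤ v̄`, given a strict Slater point with margin `δ`. -/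
lemma convex_gradient_ineq {n : ℕ} {f : EuclideanSpace ℝ (Fin n) → ℝ}
    {f' : EuclideanSpace ℝ (Fin n) → EuclideanSpace ℝ (Fin n)}
    (hf : ∀ x, HasGradientAt f (f' x) x) (hfconv : ConvexOn ℝ Set.univ f)
    (x y : EuclideanSpace ℝ (Fin n)) :
    ⟪f' x, y - x⟫_ℝ ≤ f y - f x := by
  set g : ℝ → ℝ := fun t => f (t • (y - x) + x) with hg
  have hgconv : ConvexOn ℝ Set.univ g := by
    have := hfconv.comp_affineMap
      (AffineMap.lineMap x y : ℝ →ᵃ[ℝ] EuclideanSpace ℝ (Fin n))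
    have heq : g = f ∘ (AffineMap.lineMap x y : ℝ →ᵃ[ℝ] EuclideanSpace ℝ (Fin n)) := by
      funext t; simp [g, AffineMap.lineMap_apply, vsub_eq_sub, vadd_eq_add]
    rw [heq]; exact this
  have hline : ∀ t : ℝ, HasDerivAt (fun t : ℝ => t • (y - x) + x) (y - x) t := by
    intro t
    simpa using ((hasDerivAt_id t).smul_const (y - x)).add_const x
  have hgd : ∀ t : ℝ, HasDerivAt g ⟪f' (t • (y - x) + x), y - x⟫_ℝ t := by
    intro t
    have := (hf (t • (y - x) + x)).hasFDerivAt.comp_hasDerivAt t (hline t)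
    exact this
  have h0 : HasDerivAt g ⟪f' x, y - x⟫_ℝ 0 := by simpa using hgd 0
  have hslope := hgconv.deriv_le_slope (Set.mem_univ (0:ℝ)) (Set.mem_univ (1:ℝ))
    zero_lt_one h0.differentiableAt
  rw [h0.deriv] at hslope
  have : slope g 0 1 = f y - f x := by
    simp [slope_def_field, g]
  linarith [hslope, this ▸ hslope]

theorem dual_multipliers_bounded {n m : ℕ}
    (Z : Set (EuclideanSpace ℝ (Fin n)))
    (hZne : Z.Nonempty) (hZcomp : IsCompact Z) (hZconv : Convex ℝ Z)
    (f : EuclideanSpace ℝ (Fin n) → ℝ)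
    (f' : EuclideanSpace ℝ (Fin n) → EuclideanSpace ℝ (Fin n))
    (hf : ∀ x, HasGradientAt f (f' x) x)
    (hfconv : ConvexOn ℝ Set.univ f)
    (A : Matrix (Fin m) (Fin n) ℝ) (a vlo vhi : EuclideanSpace ℝ (Fin m))
    -- the KKT point (z*, μ̲*, μ̄*)
    (zs : EuclideanSpace ℝ (Fin n)) (μlo μhi : EuclideanSpace ℝ (Fin m))
    (hzs : zs ∈ Z) (hμlo : ∀ j, 0 ≤ μlo j) (hμhi : ∀ j, 0 ≤ μhi j)
    -- primal feasibility: v̲ ≤ A z* + a ≤ v̄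
    (hfeas : ∀ j, vlo j ≤ Matrix.toEuclideanLin A zs j + a j ∧
      Matrix.toEuclideanLin A zs j + a j ≤ vhi j)
    -- variational inequality: ⟨∇f(z*) + Aᵀ(μ̄* − μ̲*), z − z*⟩ ≥ 0 for all z ∈ Z
    (hVI : ∀ z ∈ Z, 0 ≤ ⟪f' zs + Matrix.toEuclideanLin Aᵀ (μhi - μlo), z - zs⟫_ℝ)
    -- complementary slackness
    (hcomplo : ∑ j, μlo j * (Matrix.toEuclideanLin A zs j + a j - vlo j) = 0)
    (hcomphi : ∑ j, μhi j * (vhi j - Matrix.toEuclideanLin A zs j - a j) = 0)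
    -- strict Slater point z̃ with margin δ > 0
    (zt : EuclideanSpace ℝ (Fin n)) (δ : ℝ) (hδ : 0 < δ) (hzt : zt ∈ Z)
    (hslater : ∀ j, vlo j + δ ≤ Matrix.toEuclideanLin A zt j + a j ∧
      Matrix.toEuclideanLin A zt j + a j ≤ vhi j - δ) :
    ∑ j, μlo j + ∑ j, μhi j ≤ (f zt - f zs) / δ := by
  set T := Matrix.toEuclideanLin A with hT
  -- individual complementary slackness
  have hlo0 : ∀ j, μlo j * (T zs j + a j - vlo j) = 0 := by
    have := (Finset.sum_eq_zero_iff_of_nonneg (fun j _ =>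
      mul_nonneg (hμlo j) (by linarith [(hfeas j).1]))).mp hcomplo
    exact fun j => this j (Finset.mem_univ j)
  have hhi0 : ∀ j, μhi j * (vhi j - T zs j - a j) = 0 := by
    have := (Finset.sum_eq_zero_iff_of_nonneg (fun j _ =>
      mul_nonneg (hμhi j) (by linarith [(hfeas j).2]))).mp hcomphi
    exact fun j => this j (Finset.mem_univ j)
  -- transpose as adjoint
  have hadj : ⟪Matrix.toEuclideanLin Aᵀ (μhi - μlo), zt - zs⟫_ℝ
      = ⟪μhi - μlo, T zt - T zs⟫_ℝ := by
    have h1 : Matrix.toEuclideanLin Aᵀ = LinearMap.adjoint T := by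
      rw [hT, ← Matrix.toEuclideanLin_conjTranspose_eq_adjoint]
      congr 1
    rw [h1, LinearMap.adjoint_inner_left, ← map_sub]
  -- componentwise sum form of inner product
  have hsum : ⟪μhi - μlo, T zt - T zs⟫_ℝ
      = ∑ j, (μhi j - μlo j) * (T zt j - T zs j) := by
    rw [PiLp.inner_apply]
    refine Finset.sum_congr rfl fun j _ => ?_
    simp [RCLike.inner_apply]
    ring
  -- per-coordinate estimate
  have hkey : ∀ j, (μhi j - μlo j) * (T zt j - T zs j)
      ≤ -δ * (μlo j + μhi j) := by
    intro j
    have h1 : μhi j * (T zt j + a j) ≤ μhi j * (vhi j - δ) :=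
      mul_le_mul_of_nonneg_left (hslater j).2 (hμhi j)
    have h2 : μlo j * (vlo j + δ) ≤ μlo j * (T zt j + a j) :=
      mul_le_mul_of_nonneg_left (hslater j).1 (hμlo j)
    nlinarith [hlo0 j, hhi0 j]
  have hsum2 : ∑ j, (μhi j - μlo j) * (T zt j - T zs j)
      ≤ -δ * (∑ j, μlo j + ∑ j, μhi j) := by
    calc ∑ j, (μhi j - μlo j) * (T zt j - T zs j)
        ≤ ∑ j, -δ * (μlo j + μhi j) := Finset.sum_le_sum fun j _ => hkey j
      _ = -δ * (∑ j, μlo j + ∑ j, μhi j) := by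
          rw [← Finset.mul_sum, Finset.sum_add_distrib]
  -- gradient inequality
  have hgrad : ⟪f' zs, zt - zs⟫_ℝ ≤ f zt - f zs := convex_gradient_ineq hf hfconv zs zt
  have hvi := hVI zt hzt
  rw [inner_add_left, hadj, hsum] at hvi
  rw [le_div_iff₀ hδ]
  nlinarith [hvi, hgrad, hsum2]
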